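/- Discrete metric of a circular quadrilateral (key identity in Theorem 'Discrete metric for discrete isothermic nets'): Let E be a real inner product space, and let f, f₁, f₁₂, f₂ ∈ E be four pairwise distinct concyclic points (lying on a common circle). Suppose the diagonals intersect: there is a point M, distinct from the four vertices, lying on the line through f and f₁₂ and on the line through f₁ and f₂; let ρ, σ be the nonzero real numbers with f₁₂ − M = ρ(f − M) and f₂ − M = σ(f₁ − M) (the ratios of directed lengths ρ = l(M,f₁₂)/l(M,f) and σ = l(M,f₂)/l(M,f₁)). Then ρσ·‖f₁ − f‖² = ‖f₁₂ − f₂‖² and (ρ/σ)·‖f₂ − f‖² = ‖f₁₂ − f₁‖². -/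

import Mathlib

open RealInnerProductSpace

/-- Discrete metric identity for a circular quadrilateral: if the diagonals
of the concyclic quadrilateral `(f, f₁, f₁₂, f₂)` intersect at `M`, dividing
them in the ratios `ρ = l(M,f₁₂)/l(M,f)` and `σ = l(M,f₂)/l(M,f₁)`, then
`ρσ‖f₁ − f‖² = ‖f₁₂ − f₂‖²` and `(ρ/σ)‖f₂ − f‖² = ‖f₁₂ − f₁‖²`. -/
theorem circular_quadrilateral_metric_identity
    {E : Type*} [NormedAddCommGroup E] [InnerProductSpace ℝ E]
    (f f₁ f₁₂ f₂ M : E)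
    (hd1 : f ≠ f₁) (hd2 : f ≠ f₁₂) (hd3 : f ≠ f₂)
    (hd4 : f₁ ≠ f₁₂) (hd5 : f₁ ≠ f₂) (hd6 : f₁₂ ≠ f₂)
    (hcirc : EuclideanGeometry.Concyclic ({f, f₁, f₁₂, f₂} : Set E))
    (hM : M ≠ f ∧ M ≠ f₁ ∧ M ≠ f₁₂ ∧ M ≠ f₂)
    (ρ σ : ℝ) (hρ0 : ρ ≠ 0) (hσ0 : σ ≠ 0)
    (hρ : f₁₂ - M = ρ • (f - M)) (hσ : f₂ - M = σ • (f₁ - M)) :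
    ρ * σ * ‖f₁ - f‖ ^ 2 = ‖f₁₂ - f₂‖ ^ 2 ∧
      (ρ / σ) * ‖f₂ - f‖ ^ 2 = ‖f₁₂ - f₁‖ ^ 2 := by
  obtain ⟨⟨c, r, hsph⟩, -⟩ := hcirc
  have hfc : ‖f - c‖ = r := by
    rw [← dist_eq_norm]; exact hsph _ (by simp)
  have hf1c : ‖f₁ - c‖ = r := by
    rw [← dist_eq_norm]
    exact hsph _ (by simp)
  have hf12c : ‖f₁₂ - c‖ = r := by
    rw [← dist_eq_norm]
    exact hsph _ (by simp)
  have hf2c : ‖f₂ - c‖ = r := by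
    rw [← dist_eq_norm]
    exact hsph _ (by simp)
  have hρ1 : ρ ≠ 1 := by
    rintro rfl
    rw [one_smul] at hρ
    exact hd2 (sub_left_injective hρ).symm
  have hσ1 : σ ≠ 1 := by
    rintro rfl
    rw [one_smul] at hσ
    exact hd5 (sub_left_injective hσ).symm
  set u := f - M with hu
  set v := f₁ - M with hv
  set w := M - c with hw
  set A := ‖u‖ ^ 2 with hA
  set B := ‖v‖ ^ 2 with hB
  set t := ⟪u, v⟫ with ht
  set P := ⟪u, w⟫ with hP
  set Q := ⟪v, w⟫ with hQ
  set W := ‖w‖ ^ 2 with hW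
  have efc : f - c = u + w := by rw [hu, hw]; abel
  have ef1c : f₁ - c = v + w := by rw [hv, hw]; abel
  have ef12c : f₁₂ - c = ρ • u + w := by rw [hu, ← hρ, hw]; abel
  have ef2c : f₂ - c = σ • v + w := by rw [hv, ← hσ, hw]; abel
  have E1 : A + 2 * P + W = r ^ 2 := by
    rw [hA, hP, hW, ← norm_add_sq_real, ← efc, hfc]
  have E2 : ρ ^ 2 * A + 2 * (ρ * P) + W = r ^ 2 := by
    have := norm_add_sq_real (ρ • u) w
    rw [← ef12c, hf12c] at this
    rw [this, norm_smul, real_inner_smul_left]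
    simp only [mul_pow, Real.norm_eq_abs, sq_abs]
    rw [hA, hP, hW]
  have E3 : B + 2 * Q + W = r ^ 2 := by
    rw [hB, hQ, hW, ← norm_add_sq_real, ← ef1c, hf1c]
  have E4 : σ ^ 2 * B + 2 * (σ * Q) + W = r ^ 2 := by
    have := norm_add_sq_real (σ • v) w
    rw [← ef2c, hf2c] at this
    rw [this, norm_smul, real_inner_smul_left]
    simp only [mul_pow, Real.norm_eq_abs, sq_abs]
    rw [hB, hQ, hW]
  -- power of the point M
  have hPA : (ρ + 1) * A + 2 * P = 0 := by
    have h : (ρ - 1) * ((ρ + 1) * A + 2 * P) = 0 := by linear_combination E2 - E1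
    rcases mul_eq_zero.mp h with h' | h'
    · exact absurd (by linarith) hρ1
    · exact h'
  have hQB : (σ + 1) * B + 2 * Q = 0 := by
    have h : (σ - 1) * ((σ + 1) * B + 2 * Q) = 0 := by linear_combination E4 - E3
    rcases mul_eq_zero.mp h with h' | h'
    · exact absurd (by linarith) hσ1
    · exact h'
  have key : ρ * A = σ * B := by linear_combination hPA - hQB - E1 + E3
  -- expand the goal norms
  have g1 : ‖f₁ - f‖ ^ 2 = B - 2 * t + A := by
    have : f₁ - f = v - u := by rw [hu, hv]; abel
    rw [this, norm_sub_sq_real, real_inner_comm]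
  have g2 : ‖f₁₂ - f₂‖ ^ 2 = ρ ^ 2 * A - 2 * (ρ * σ * t) + σ ^ 2 * B := by
    have e : f₁₂ - f₂ = ρ • u - σ • v := by rw [← hρ, ← hσ]; abel
    rw [e, norm_sub_sq_real, norm_smul, norm_smul, real_inner_smul_left,
      real_inner_smul_right]
    rw [hA, hB, ht]
    simp only [mul_pow, Real.norm_eq_abs, sq_abs]
    ring
  have g3 : ‖f₂ - f‖ ^ 2 = σ ^ 2 * B - 2 * (σ * t) + A := by
    have e : f₂ - f = σ • v - u := by rw [← hσ, hu]; abel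
    rw [e, norm_sub_sq_real, norm_smul, real_inner_smul_left, real_inner_comm]
    rw [hA, hB, ht]
    simp only [mul_pow, Real.norm_eq_abs, sq_abs]
  have g4 : ‖f₁₂ - f₁‖ ^ 2 = ρ ^ 2 * A - 2 * (ρ * t) + B := by
    have e : f₁₂ - f₁ = ρ • u - v := by rw [← hρ, hv]; abel
    rw [e, norm_sub_sq_real, norm_smul, real_inner_smul_left]
    rw [hA, hB, ht]
    simp only [mul_pow, Real.norm_eq_abs, sq_abs]
  constructor
  · rw [g1, g2]; linear_combination (σ - ρ) * key
  · rw [g3, g4]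
    field_simp
    linear_combination (1 - ρ * σ) * key
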